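/- Let n ≥ 3 be odd, set d = (n+1)/2, and let e, r, m ∈ ℕ with e | d, 0 ≤ r ≤ e−1 and m ≥ 1. Let X = ⟨σ_2, σ_3, …, σ_{n−1}, e·ω_{n−1}, r·ω_{n−1} + m·ω_n⟩_ℤ ⊆ Λ. Then the family {α_1^∨|_X, α_3^∨|_X, …, α_n^∨|_X} (restrictions of the coroots with odd index to X) is part of a ℤ-basis of the dual lattice X^* = Hom_ℤ(X, ℤ) if and only if m = 1. -/

import Mathlib

/-- The fundamental weights `ω_1, …, ω_n` of `SL(n+1)` in the weight lattice
`Λ = ℤⁿ`: `ω_j` is the `j`-th standard basis vector for `1 ≤ j ≤ n`, and by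
convention `ω_0 = ω_{n+1} = 0`. -/
def w (n : ℕ) (j : ℕ) : Fin n → ℤ := fun i => if (i : ℕ) + 1 = j then 1 else 0

/-- The simple roots of `SL(n+1)`: `α_i = 2ω_i − ω_{i−1} − ω_{i+1}` for `1 ≤ i ≤ n`. -/
def sroot (n : ℕ) (i : ℕ) : Fin n → ℤ := 2 • w n i - w n (i - 1) - w n (i + 1)

/-- `σ_i = α_i + α_{i+1}` for `1 ≤ i ≤ n−1`. -/
def sig (n : ℕ) (i : ℕ) : Fin n → ℤ := sroot n i + sroot n (i + 1)

/-- `ℤS⁺`, the subgroup of `Λ` generated by `σ_1, …, σ_{n−1}`. -/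
def ZSplus (n : ℕ) : Submodule ℤ (Fin n → ℤ) :=
  Submodule.span ℤ (sig n '' Set.Icc 1 (n - 1))

/-- A family of elements of a `ℤ`-module is *part of a basis* if it can be extended
to (i.e. realized injectively inside) a `ℤ`-basis. -/
def IsPartOfBasis {M : Type} [AddCommGroup M] [Module ℤ M] {ι : Type} (v : ι → M) : Prop :=
  ∃ (κ : Type) (b : Module.Basis κ ℤ M) (f : ι → κ), Function.Injective f ∧ ∀ i, b (f i) = v i

/-- The family of restrictions to `X` of the coroots with odd index
`α_1^∨, α_3^∨, …`, where `α_i^∨` is the `i`-th coordinate functional on `Λ = ℤⁿ`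
(i.e. `⟨α_i^∨, ω_j⟩ = δ_{ij}`), viewed as elements of `X^* = Hom_ℤ(X, ℤ)`.
The odd indices `1, 3, …` in `{1, …, n}` are enumerated by `j ↦ 2j+1`. -/
def oddCoroots (n : ℕ) (X : Submodule ℤ (Fin n → ℤ)) :
    Fin ((n + 1) / 2) → (X →ₗ[ℤ] ℤ) := fun j =>
  (LinearMap.proj (R := ℤ) (φ := fun _ : Fin n => ℤ)
    ⟨2 * (j : ℕ), by have := j.isLt; omega⟩).domRestrict X

open Module in
theorem isPartOfBasis_iff_surjective {M : Type} [AddCommGroup M] [Module ℤ M]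
    [Module.Finite ℤ M] [Module.Free ℤ M] {d : ℕ} (v : Fin d → (M →ₗ[ℤ] ℤ)) :
    IsPartOfBasis v ↔ Function.Surjective (LinearMap.pi v) := by
  classical
  constructor
  · rintro ⟨κ, b, f, hf, hbf⟩ y
    set g : Dual ℤ (Dual ℤ M) := ∑ i, y i • b.coord (f i) with hg
    refine ⟨(Module.evalEquiv ℤ M).symm g, ?_⟩
    funext j
    have h1 : (LinearMap.pi v) ((Module.evalEquiv ℤ M).symm g) j
        = (Module.evalEquiv ℤ M ((Module.evalEquiv ℤ M).symm g)) (v j) := by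
      simp [Module.evalEquiv_apply]
    rw [h1, LinearEquiv.apply_symm_apply]
    have h2 : g (v j) = y j := by
      rw [← hbf j]
      calc g (b (f j)) = ∑ i, y i * (if f j = f i then 1 else 0) := by
            simp [hg, Basis.coord_apply, Basis.repr_self, Finsupp.single_apply]
        _ = ∑ i, (if j = i then y i else 0) := by
            refine Finset.sum_congr rfl (fun i _ => ?_)
            rcases eq_or_ne j i with h | h
            · simp [h]
            · simp [h, hf.ne h]
        _ = y j := by simp
    exact h2
  · intro hs
    set Φ := LinearMap.pi v with hΦ
    obtain ⟨s, hsec⟩ := projective_lifting_property Φ (LinearMap.id (R := ℤ) (M := Fin d → ℤ)) hs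
    have hsec' : ∀ y, Φ (s y) = y := fun y => congrFun (congrArg (fun f => f.toFun) hsec) y
    letI : Module ℤ ↥(LinearMap.ker Φ) := (LinearMap.ker Φ).module
    letI : Module ℤ (↥(LinearMap.ker Φ) × (Fin d → ℤ)) := Prod.instModule
    have hker : ∀ x : M, (LinearMap.id (R := ℤ) (M := M) - s ∘ₗ Φ) x ∈ LinearMap.ker Φ := by
      intro x
      simp [LinearMap.mem_ker, map_sub, hsec']
    let F : M →ₗ[ℤ] (LinearMap.ker Φ × (Fin d → ℤ)) :=
      LinearMap.prod ((LinearMap.id (R := ℤ) (M := M) - s ∘ₗ Φ).codRestrict (LinearMap.ker Φ) hker) Φ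
    let G : (LinearMap.ker Φ × (Fin d → ℤ)) →ₗ[ℤ] M :=
      (LinearMap.ker Φ).subtype.coprod s
    have hGF : G ∘ₗ F = LinearMap.id := by
      ext x
      simp [F, G]
    have hFG : F ∘ₗ G = LinearMap.id := by
      apply LinearMap.ext
      rintro ⟨⟨k, hk⟩, y⟩
      have hΦk : Φ k = 0 := hk
      apply Prod.ext
      · apply Subtype.ext
        simp [F, G, map_add, hΦk, hsec']
      · simp [F, G, map_add, hΦk, hsec']
    let E : M ≃ₗ[ℤ] (LinearMap.ker Φ × (Fin d → ℤ)) := LinearEquiv.ofLinear F G hFG hGF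
    obtain ⟨k, bK⟩ := Submodule.basisOfPid (Module.Free.chooseBasis ℤ M) (LinearMap.ker Φ)
    let bM : Basis (Fin k ⊕ Fin d) ℤ M := (bK.prod (Pi.basisFun ℤ (Fin d))).map E.symm
    refine ⟨Fin k ⊕ Fin d, bM.dualBasis, Sum.inr, Sum.inr_injective, ?_⟩
    intro i
    apply LinearMap.ext
    intro x
    have h2 : bM.dualBasis (Sum.inr i) x = bM.repr x (Sum.inr i) := by
      simp [Basis.coe_dualBasis, Basis.coord_apply]
    rw [h2]
    have h3 : bM.repr x (Sum.inr i) = (bK.prod (Pi.basisFun ℤ (Fin d))).repr (E x) (Sum.inr i) := by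
      simp [bM, Basis.map_repr]
    rw [h3]
    have h4 : (bK.prod (Pi.basisFun ℤ (Fin d))).repr (E x) (Sum.inr i)
        = (Pi.basisFun ℤ (Fin d)).repr (E x).2 i := by
      simp [Basis.prod_repr_inr]
    rw [h4]
    have h5 : (E x).2 = Φ x := rfl
    simp [h5, Pi.basisFun_repr, hΦ]

set_option maxHeartbeats 1600000 in
/-- For `n ≥ 3` odd, `d = (n+1)/2`, and `e, r, m ∈ ℕ` with `e ∣ d`, `r ≤ e−1`,
`m ≥ 1`, let `X = ⟨σ_2, …, σ_{n−1}, e·ω_{n−1}, r·ω_{n−1} + m·ω_n⟩_ℤ ⊆ Λ`.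
Then `{α_1^∨|_X, α_3^∨|_X, …, α_n^∨|_X}` is part of a `ℤ`-basis of
`X^* = Hom_ℤ(X, ℤ)` if and only if `m = 1`. -/
theorem stmt14 (n : ℕ) (hn : 3 ≤ n) (hno : Odd n) (e r m : ℕ)
    (he : e ∣ (n + 1) / 2) (hr : r ≤ e - 1) (hm : 1 ≤ m)
    (X : Submodule ℤ (Fin n → ℤ))
    (hX : X = Submodule.span ℤ (sig n '' Set.Icc 2 (n - 1) ∪
      {(e : ℤ) • w n (n - 1), (r : ℤ) • w n (n - 1) + (m : ℤ) • w n n})) :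
    IsPartOfBasis (oddCoroots n X) ↔ m = 1 := by
  classical
  have hn1 : n % 2 = 1 := Nat.odd_iff.mp hno
  subst hX
  set d : ℕ := (n + 1) / 2 with hd
  have h2d : 2 * d = n + 1 := by omega
  have hd2 : 2 ≤ d := by omega
  set S : Set (Fin n → ℤ) := sig n '' Set.Icc 2 (n - 1) ∪
      {(e : ℤ) • w n (n - 1), (r : ℤ) • w n (n - 1) + (m : ℤ) • w n n} with hS
  set P : (Fin n → ℤ) →ₗ[ℤ] (Fin d → ℤ) :=
    LinearMap.pi (fun j : Fin d => LinearMap.proj (R := ℤ) (φ := fun _ : Fin n => ℤ)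
      ⟨2 * (j : ℕ), by have := j.isLt; omega⟩) with hP
  rw [isPartOfBasis_iff_surjective]
  have hpi : LinearMap.pi (oddCoroots n (Submodule.span ℤ S))
      = P ∘ₗ (Submodule.span ℤ S).subtype := rfl
  have hsurj_iff : Function.Surjective (LinearMap.pi (oddCoroots n (Submodule.span ℤ S)))
      ↔ Submodule.span ℤ (P '' S) = ⊤ := by
    rw [hpi, ← LinearMap.range_eq_top, LinearMap.range_comp, Submodule.range_subtype,
      Submodule.map_span]
  rw [hsurj_iff]
  have hsig_eq : ∀ i : ℕ, sig n i = w n i + w n (i+1) - w n (i-1) - w n (i+2) := by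
    intro i
    show sroot n i + sroot n (i+1) = _
    simp only [sroot, Nat.add_sub_cancel]
    abel
  have hPsig : ∀ k : ℕ, 1 ≤ k → k ≤ d - 1 → P (sig n (2 * k)) =
      (fun j : Fin d => if (j : ℕ) = k then (1:ℤ) else 0)
        - (fun j : Fin d => if (j : ℕ) = k - 1 then (1:ℤ) else 0) := by
    intro k hk1 hk2
    rw [hsig_eq]
    funext j
    have hj := j.isLt
    simp only [hP, w, LinearMap.pi_apply, LinearMap.proj_apply, Pi.add_apply,
      Pi.sub_apply]
    split_ifs <;> omega
  have hlast : P ((r:ℤ) • w n (n-1) + (m:ℤ) • w n n)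
      = fun j : Fin d => if (j:ℕ) = d - 1 then (m:ℤ) else 0 := by
    funext j
    have hj := j.isLt
    simp only [hP, w, LinearMap.pi_apply, LinearMap.proj_apply, Pi.add_apply,
      Pi.smul_apply, smul_eq_mul]
    split_ifs <;> omega
  have hmemP : ∀ x ∈ S, P x ∈ Submodule.span ℤ (P '' S) :=
    fun x hx => Submodule.subset_span ⟨x, hx, rfl⟩
  constructor
  · -- span = ⊤ → m = 1
    intro htop
    set L : (Fin d → ℤ) →ₗ[ℤ] ℤ := ∑ j : Fin d, LinearMap.proj j with hLdef
    have hL : ∀ y : Fin d → ℤ, L y = ∑ j : Fin d, y j := by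
      intro y
      simp [hLdef, LinearMap.sum_apply]
    have hsum : ∀ a : ℕ, (∑ j : Fin d, if 2*(j:ℕ)+1 = a then (1:ℤ) else 0)
        = if a % 2 = 1 ∧ a ≤ n then 1 else 0 := by
      intro a
      by_cases h : a % 2 = 1 ∧ a ≤ n
      · rw [if_pos h]
        have ha : a / 2 < d := by omega
        have hc : ∀ j : Fin d, (if 2*(j:ℕ)+1 = a then (1:ℤ) else 0)
            = (if j = (⟨a/2, ha⟩ : Fin d) then 1 else 0) := by
          intro j
          apply if_congr _ rfl rfl
          constructor
          · intro hh; exact Fin.ext (by simp; omega)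
          · rintro rfl; simp; omega
        simp only [hc]
        rw [Finset.sum_ite_eq' Finset.univ]
        simp
      · rw [if_neg h]
        apply Finset.sum_eq_zero
        intro j _
        have hj := j.isLt
        rw [if_neg (by omega)]
    have hLsig : ∀ i : ℕ, 2 ≤ i → i ≤ n - 1 → L (P (sig n i)) = 0 := by
      intro i h2 hn'
      rw [hL]
      have hterm : ∀ j : Fin d, (P (sig n i)) j =
          (if 2*(j:ℕ)+1 = i then (1:ℤ) else 0) + (if 2*(j:ℕ)+1 = i+1 then 1 else 0)
          - (if 2*(j:ℕ)+1 = i-1 then 1 else 0) - (if 2*(j:ℕ)+1 = i+2 then 1 else 0) := by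
        intro j
        have hj := j.isLt
        rw [hsig_eq]
        simp only [hP, w, LinearMap.pi_apply, LinearMap.proj_apply, Pi.add_apply,
          Pi.sub_apply]
        all_goals split_ifs <;> omega
      simp only [hterm]
      rw [Finset.sum_sub_distrib, Finset.sum_sub_distrib, Finset.sum_add_distrib,
        hsum, hsum, hsum, hsum]
      split_ifs <;> omega
    have hdvd : ∀ x ∈ Submodule.span ℤ (P '' S), (m:ℤ) ∣ L x := by
      intro x hx
      induction hx using Submodule.span_induction with
      | mem x hxS =>
        obtain ⟨g, hg, rfl⟩ := hxS
        rcases hg with ⟨i, hi, rfl⟩ | hg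
        · rw [hLsig i (Set.mem_Icc.mp hi).1 (Set.mem_Icc.mp hi).2]
          exact dvd_zero _
        · simp only [Set.mem_insert_iff, Set.mem_singleton_iff] at hg
          rcases hg with rfl | rfl
          · rw [map_smul, map_smul, smul_eq_mul]
            have : L (P (w n (n-1))) = 0 := by
              rw [hL]
              have : ∀ j : Fin d, (P (w n (n-1))) j = (if 2*(j:ℕ)+1 = n-1 then (1:ℤ) else 0) := by
                intro j
                simp only [hP, w, LinearMap.pi_apply, LinearMap.proj_apply]
              simp only [this]
              rw [hsum]
              have : ¬((n-1) % 2 = 1 ∧ n - 1 ≤ n) := by omega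
              rw [if_neg this]
            rw [this, mul_zero]
            exact dvd_zero _
          · rw [hlast, hL]
            have : (∑ j : Fin d, if (j:ℕ) = d - 1 then (m:ℤ) else 0) = (m:ℤ) := by
              have hc : ∀ j : Fin d, (if (j:ℕ) = d - 1 then (m:ℤ) else 0)
                  = (if j = (⟨d-1, by omega⟩ : Fin d) then (m:ℤ) else 0) := by
                intro j
                apply if_congr _ rfl rfl
                constructor
                · intro hh; exact Fin.ext (by simp; omega)
                · rintro rfl; simp
              simp only [hc]
              rw [Finset.sum_ite_eq' Finset.univ]
              simp
            rw [this]
      | zero => simp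
      | add x y _ _ hx hy => rw [map_add]; exact dvd_add hx hy
      | smul a x _ hx => rw [map_smul, smul_eq_mul]; exact hx.mul_left a
    have hmem1 : (fun j : Fin d => if 2*(j:ℕ)+1 = 1 then (1:ℤ) else 0)
        ∈ Submodule.span ℤ (P '' S) := by rw [htop]; trivial
    have hdvd1 : (m:ℤ) ∣ 1 := by
      have h := hdvd _ hmem1
      rw [hL, hsum] at h
      rwa [if_pos ⟨rfl, by omega⟩] at h
    have hle := Int.le_of_dvd one_pos hdvd1
    omega
  · -- m = 1 → span = ⊤
    intro hm1
    have hg2 : ((r:ℤ) • w n (n-1) + (m:ℤ) • w n n) ∈ S := by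
      rw [hS]; right; right; rfl
    have hdelta : ∀ c : ℕ, c ≤ d - 1 →
        (fun j : Fin d => if (j:ℕ) = d - 1 - c then (1:ℤ) else 0)
          ∈ Submodule.span ℤ (P '' S) := by
      intro c
      induction c with
      | zero =>
        intro _
        have h := hmemP _ hg2
        rw [hlast] at h
        simpa [hm1] using h
      | succ c ih =>
        intro hc
        have hk1 : 1 ≤ d - 1 - c := by omega
        have heq : (fun j : Fin d => if (j:ℕ) = d - 1 - (c+1) then (1:ℤ) else 0)
            = (fun j : Fin d => if (j:ℕ) = d - 1 - c then (1:ℤ) else 0)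
              - P (sig n (2 * (d - 1 - c))) := by
          rw [hPsig (d-1-c) hk1 (by omega)]
          funext j
          simp only [Pi.sub_apply]
          split_ifs <;> omega
        rw [heq]
        refine sub_mem (ih (by omega)) (hmemP _ ?_)
        rw [hS]; left
        exact ⟨2*(d-1-c), Set.mem_Icc.mpr ⟨by omega, by omega⟩, rfl⟩
    rw [eq_top_iff]
    rintro y -
    rw [pi_eq_sum_univ y]
    refine Submodule.sum_mem _ (fun i _ => Submodule.smul_mem _ _ ?_)
    have hi := i.isLt
    have heq : (fun j : Fin d => if i = j then (1:ℤ) else 0)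
        = (fun j : Fin d => if (j:ℕ) = d - 1 - (d - 1 - (i:ℕ)) then (1:ℤ) else 0) := by
      funext j
      apply if_congr _ rfl rfl
      constructor
      · rintro rfl; omega
      · intro hh; exact Fin.ext (by omega)
    rw [heq]
    exact hdelta (d - 1 - (i:ℕ)) (by omega)
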